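/- arXiv:2203.17146 — 2 statements merged into one kernel-verified Lean document; each statement's English description precedes it below -/
import Mathlib

section
/- Let n ≥ 1, k ≥ 1, let x : Fin n → ℝ be agents on the real line, and let α > 1 be a real number. Set β = max{1, 1/(α − 1)}. Then there exists a k-clustering Y : Fin k → ℝ that is an (α, β)-core clustering; that is, for every set S ⊆ Fin n with |S| ≥ α·n/k and every point y' ∈ ℝ, one has β·Σ_{i∈S} |x_i − y'| ≥ Σ_{i∈S} min_{j<k} |x_i − Y_j|. -/
/-- The cost of agent location `p` under the `k`-clustering `Y`:
the minimum distance from `p` to a center of `Y`. -/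
noncomputable def clusterCost {X : Type*} [MetricSpace X] {k : ℕ} (Y : Fin k → X) (p : X) : ℝ :=
  sInf (Set.range fun j => dist p (Y j))

lemma clusterCost_le {X : Type*} [MetricSpace X] {k : ℕ} (Y : Fin k → X) (p : X) (j : Fin k) :
    clusterCost Y p ≤ dist p (Y j) :=
  csInf_le ⟨0, by rintro r ⟨j', rfl⟩; exact dist_nonneg⟩ ⟨j, rfl⟩

/-- Bounds for the "ceiling division" `(m + (k-1))/k`. -/
lemma div_mul_bounds (k m : ℕ) (hk : 0 < k) :
    m ≤ k * ((m + (k - 1)) / k) ∧ k * ((m + (k - 1)) / k) ≤ m + k - 1 := by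
  have hdm := Nat.div_add_mod (m + (k - 1)) k
  have hr : (m + (k - 1)) % k < k := Nat.mod_lt _ hk
  set t := k * ((m + (k - 1)) / k) with ht
  set r := (m + (k - 1)) % k with hrr
  omega

/-- Number of agents strictly between consecutive quantile indices is at most `n/k`. -/
lemma gap_mul_bound (k n m1 : ℕ) (hk : 0 < k) (hn : 0 < n) (hm1 : 0 < m1) :
    k * ((((m1 + n) + (k - 1)) / k - 1) - ((m1 + (k - 1)) / k - 1) - 1) ≤ n := by
  obtain ⟨hA1, hA2⟩ := div_mul_bounds k m1 hk
  obtain ⟨hB1, hB2⟩ := div_mul_bounds k (m1 + n) hk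
  set A := (m1 + (k - 1)) / k with hA
  set B := ((m1 + n) + (k - 1)) / k with hB
  have hA0 : 1 ≤ A := by
    rw [hA, Nat.le_div_iff_mul_le hk]; omega
  by_cases hBA : B ≤ A + 1
  · have h0 : (B - 1) - (A - 1) - 1 = 0 := by omega
    rw [h0]; simp
  · push_neg at hBA
    set u := (B - 1) - (A - 1) - 1 with hu'
    have hu : u + (A + 1) = B := by omega
    have step : k * u + k * A + k = k * B := by rw [← hu]; ring
    generalize hgu : k * u = KU at step ⊢
    generalize hga : k * A = KA at step hA1 hA2
    generalize hgb : k * B = KB at step hB1 hB2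
    omega

lemma iio_mul_bound (k n : ℕ) (hk : 0 < k) (hn : 0 < n) :
    k * ((n + (k - 1)) / k - 1) ≤ n := by
  obtain ⟨hA1, hA2⟩ := div_mul_bounds k n hk
  set A := (n + (k - 1)) / k with hA
  have hA0 : 1 ≤ A := by
    rw [hA, Nat.le_div_iff_mul_le hk]; omega
  have hmul : k * (A - 1) + k = k * A := by
    have : A - 1 + 1 = A := by omega
    calc k * (A - 1) + k = k * ((A - 1) + 1) := by ring
    _ = k * A := by rw [this]
  set KA := k * A with hKA
  set KB := k * (A - 1) with hKB
  omega

/-- Main accounting lemma: sum of costs over a partitioned coalition. -/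
lemma core_aux {n : ℕ} {S P G Q : Finset (Fin n)} {cost d : Fin n → ℝ}
    {β aP aQ c nk A : ℝ}
    (hβ : 1 ≤ β) (hβA : 1 ≤ β * A)
    (hc : 0 ≤ c) (hcP : c ≤ aP) (hcQ : c ≤ aQ)
    (hd : ∀ i, 0 ≤ d i)
    (hP : ∀ i ∈ P, cost i ≤ d i - aP)
    (hQ : ∀ i ∈ Q, cost i ≤ d i - aQ)
    (hG : ∀ i ∈ G, cost i ≤ d i + c)
    (hdP : ∀ i ∈ P, aP ≤ d i)
    (hdQ : ∀ i ∈ Q, aQ ≤ d i)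
    (hGc : (G.card : ℝ) ≤ nk)
    (hSc : (1 + A) * nk ≤ S.card)
    (hU : S = (P ∪ G) ∪ Q)
    (hPG : Disjoint P G) (hPQ : Disjoint P Q) (hGQ : Disjoint G Q) :
    ∑ i ∈ S, cost i ≤ β * ∑ i ∈ S, d i := by
  classical
  have hPGQ : Disjoint (P ∪ G) Q := Finset.disjoint_union_left.2 ⟨hPQ, hGQ⟩
  have hsum : ∀ f : Fin n → ℝ,
      ∑ i ∈ S, f i = ∑ i ∈ P, f i + ∑ i ∈ G, f i + ∑ i ∈ Q, f i := by
    intro f; rw [hU, Finset.sum_union hPGQ, Finset.sum_union hPG]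
  have hcard : (S.card : ℝ) = P.card + G.card + Q.card := by
    rw [hU, Finset.card_union_of_disjoint hPGQ, Finset.card_union_of_disjoint hPG]
    push_cast; ring
  set p := (P.card : ℝ) with hp'
  set g := (G.card : ℝ) with hg'
  set q := (Q.card : ℝ) with hq'
  have hp : 0 ≤ p := by positivity
  have hq : 0 ≤ q := by positivity
  have hg : 0 ≤ g := by positivity
  have hnk : 0 ≤ nk := le_trans hg hGc
  have hβ0 : 0 ≤ β := le_trans zero_le_one hβ
  have h1 : ∑ i ∈ P, cost i ≤ ∑ i ∈ P, d i - p * aP := by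
    have := Finset.sum_le_sum hP
    rwa [Finset.sum_sub_distrib, Finset.sum_const, nsmul_eq_mul] at this
  have h2 : ∑ i ∈ Q, cost i ≤ ∑ i ∈ Q, d i - q * aQ := by
    have := Finset.sum_le_sum hQ
    rwa [Finset.sum_sub_distrib, Finset.sum_const, nsmul_eq_mul] at this
  have h3 : ∑ i ∈ G, cost i ≤ ∑ i ∈ G, d i + g * c := by
    have := Finset.sum_le_sum hG
    rwa [Finset.sum_add_distrib, Finset.sum_const, nsmul_eq_mul] at this
  have t1 : p * aP ≤ ∑ i ∈ P, d i := by
    calc p * aP = ∑ _i ∈ P, aP := by rw [Finset.sum_const, nsmul_eq_mul]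
    _ ≤ ∑ i ∈ P, d i := Finset.sum_le_sum hdP
  have t2 : q * aQ ≤ ∑ i ∈ Q, d i := by
    calc q * aQ = ∑ _i ∈ Q, aQ := by rw [Finset.sum_const, nsmul_eq_mul]
    _ ≤ ∑ i ∈ Q, d i := Finset.sum_le_sum hdQ
  have t3 : 0 ≤ ∑ i ∈ G, d i := Finset.sum_nonneg fun i _ => hd i
  -- key: g * c ≤ β * (p * aP + q * aQ)
  have k3 : A * nk ≤ p + q := by
    have e1 : (1 + A) * nk = nk + A * nk := by ring
    linarith [hcard, hSc, hGc]
  have key : g * c ≤ β * (p * aP + q * aQ) := by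
    have k1 : g * c ≤ nk * c := mul_le_mul_of_nonneg_right hGc hc
    have k2 : nk * c ≤ (β * A) * (nk * c) :=
      le_mul_of_one_le_left (mul_nonneg hnk hc) hβA
    have k4 : (β * A) * (nk * c) = β * ((A * nk) * c) := by ring
    have k5 : (A * nk) * c ≤ (p + q) * c := mul_le_mul_of_nonneg_right k3 hc
    have k6 : (p + q) * c ≤ p * aP + q * aQ := by
      have w1 : p * c ≤ p * aP := mul_le_mul_of_nonneg_left hcP hp
      have w2 : q * c ≤ q * aQ := mul_le_mul_of_nonneg_left hcQ hq
      nlinarith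
    have k7 : β * ((A * nk) * c) ≤ β * ((p + q) * c) :=
      mul_le_mul_of_nonneg_left k5 hβ0
    have k8 : β * ((p + q) * c) ≤ β * (p * aP + q * aQ) :=
      mul_le_mul_of_nonneg_left k6 hβ0
    linarith
  have e1 := hsum cost
  have e2 := hsum d
  have W : p * aP + q * aQ ≤ ∑ i ∈ S, d i := by rw [e2]; linarith
  have hW0 : 0 ≤ p * aP + q * aQ := by
    have := mul_nonneg hp (le_trans hc hcP)
    have := mul_nonneg hq (le_trans hc hcQ)
    linarith
  have last : (β - 1) * (p * aP + q * aQ) ≤ (β - 1) * ∑ i ∈ S, d i :=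
    mul_le_mul_of_nonneg_left W (by linarith)
  have ring1 : (β - 1) * (∑ i ∈ S, d i) = β * (∑ i ∈ S, d i) - ∑ i ∈ S, d i := by ring
  have ring2 : (β - 1) * (p * aP + q * aQ)
      = β * (p * aP + q * aQ) - (p * aP + q * aQ) := by ring
  linarith

theorem stmt17 {n k : ℕ} (hn : 0 < n) (hk : 0 < k) (x : Fin n → ℝ)
    (α : ℝ) (hα : 1 < α) :
    ∃ Y : Fin k → ℝ,
      ∀ S : Finset (Fin n), α * (n : ℝ) / (k : ℝ) ≤ S.card →
        ∀ y' : ℝ,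
          ∑ i ∈ S, clusterCost Y (x i) ≤
            max 1 (1 / (α - 1)) * ∑ i ∈ S, |x i - y'| := by
  classical
  set σ := Tuple.sort x with hσ
  set v : Fin n → ℝ := x ∘ σ with hv
  have hmono : Monotone v := Tuple.monotone_sort x
  have hvx : ∀ i, v (σ.symm i) = x i := fun i => by
    simp [hv, Equiv.apply_symm_apply]
  have hidxlt : ∀ j : Fin k, ((j.val + 1) * n + (k - 1)) / k - 1 < n := by
    intro j
    have h1 : (j.val + 1) * n + (k - 1) ≤ k * n + (k - 1) := by
      have hj : j.val + 1 ≤ k := j.isLt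
      have := Nat.mul_le_mul_right n hj
      omega
    have h2 : ((j.val + 1) * n + (k - 1)) / k ≤ (k * n + (k - 1)) / k :=
      Nat.div_le_div_right h1
    have h3 : (k * n + (k - 1)) / k = n := by
      rw [Nat.mul_add_div hk, Nat.div_eq_of_lt (by omega)]
      omega
    omega
  set idx : Fin k → Fin n := fun j => ⟨((j.val + 1) * n + (k - 1)) / k - 1, hidxlt j⟩
    with hidx
  set Y : Fin k → ℝ := fun j => v (idx j) with hY
  refine ⟨Y, ?_⟩
  intro S hS y'
  set β : ℝ := max 1 (1 / (α - 1)) with hβdef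
  have hα1 : (0:ℝ) < α - 1 := by linarith
  have hβ1 : 1 ≤ β := le_max_left _ _
  have hβA : 1 ≤ β * (α - 1) := by
    have h := le_max_right 1 (1 / (α - 1))
    have : (1 / (α - 1)) * (α - 1) = 1 := by field_simp
    nlinarith
  set d : Fin n → ℝ := fun i => |x i - y'| with hd'
  have hd : ∀ i, 0 ≤ d i := fun i => abs_nonneg _
  have hcost_le : ∀ (i : Fin n) (j : Fin k), clusterCost Y (x i) ≤ |x i - Y j| := by
    intro i j
    simpa [Real.dist_eq] using clusterCost_le Y (x i) j
  have hkR : (0:ℝ) < k := by exact_mod_cast hk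
  have hnk0 : (0:ℝ) ≤ (n:ℝ) / k := by positivity
  have hScard : (1 + (α - 1)) * ((n:ℝ) / k) ≤ S.card := by
    have : (1 + (α - 1)) * ((n:ℝ) / k) = α * (n:ℝ) / k := by ring
    rw [this]; exact hS
  -- reflection lemmas
  have hlt_of : ∀ (i : Fin n) (j : Fin k), x i < Y j → σ.symm i < idx j := by
    intro i j h
    have : v (σ.symm i) < v (idx j) := by rw [hvx]; exact h
    exact hmono.reflect_lt this
  have hgt_of : ∀ (i : Fin n) (j : Fin k), Y j < x i → idx j < σ.symm i := by
    intro i j h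
    have : v (idx j) < v (σ.symm i) := by rw [hvx]; exact h
    exact hmono.reflect_lt this
  by_cases hT : ∃ j : Fin k, y' < Y j
  · -- some center strictly to the right of y'
    set T : Finset (Fin k) := Finset.univ.filter (fun j => y' < Y j) with hTdef
    have hTne : T.Nonempty := by
      obtain ⟨j, hj⟩ := hT
      exact ⟨j, by simp [hTdef, hj]⟩
    set j₀ := T.min' hTne with hj₀def
    have hj₀ : y' < Y j₀ := by
      have := T.min'_mem hTne
      simpa [hTdef] using this
    have hj₀min : ∀ j : Fin k, y' < Y j → j₀ ≤ j := by
      intro j hj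
      exact T.min'_le j (by simp [hTdef, hj])
    have hb0 : (0:ℝ) ≤ Y j₀ - y' := by linarith
    have hdi_pos : ∀ i : Fin n, Y j₀ ≤ x i → d i = x i - y' := by
      intro i hxi
      simp only [hd']
      rw [abs_of_nonneg (by linarith)]
    by_cases h0 : j₀.val = 0
    · -- no center to the left: P = ∅
      set G := S.filter (fun i => x i < Y j₀) with hG'
      set Q := S.filter (fun i => ¬ x i < Y j₀) with hQ'
      have hGcard : (G.card : ℝ) ≤ (n:ℝ) / k := by
        have hinj : G.card ≤ (Finset.Iio (idx j₀)).card := by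
          apply Finset.card_le_card_of_injOn (fun i => σ.symm i)
          · intro i hi
            rw [hG', Finset.mem_coe, Finset.mem_filter] at hi
            exact Finset.mem_Iio.2 (hlt_of i j₀ hi.2)
          · exact fun p _ q _ hpq => σ.symm.injective hpq
        have hcard2 : (Finset.Iio (idx j₀)).card = (idx j₀).val := Fin.card_Iio _
        have hval : (idx j₀).val = (n + (k - 1)) / k - 1 := by
          simp only [hidx, h0]
          norm_num
        have hnat : k * G.card ≤ n := by
          have hb := iio_mul_bound k n hk hn
          have hG2 : G.card ≤ (n + (k - 1)) / k - 1 := by omega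
          calc k * G.card ≤ k * ((n + (k - 1)) / k - 1) := Nat.mul_le_mul_left k hG2
          _ ≤ n := hb
        rw [le_div_iff₀ hkR]
        calc (G.card : ℝ) * k = (k * G.card : ℕ) := by push_cast; ring
        _ ≤ (n : ℕ) := by exact_mod_cast hnat
      refine core_aux (P := (∅ : Finset (Fin n))) (G := G) (Q := Q)
        (cost := fun i => clusterCost Y (x i)) (d := d)
        (aP := Y j₀ - y') (aQ := Y j₀ - y') (c := Y j₀ - y') (nk := (n:ℝ)/k) (A := α - 1)
        hβ1 hβA hb0 le_rfl le_rfl hd ?_ ?_ ?_ ?_ ?_ hGcard hScard ?_ ?_ ?_ ?_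
      · intro i hi; exact absurd hi (Finset.notMem_empty i)
      · intro i hi
        rw [hQ', Finset.mem_filter] at hi
        have hxi : Y j₀ ≤ x i := not_lt.1 hi.2
        have h1 : clusterCost Y (x i) ≤ x i - Y j₀ := by
          have := hcost_le i j₀
          rwa [abs_of_nonneg (by linarith)] at this
        have h2 := hdi_pos i hxi
        linarith
      · intro i _
        have h1 : clusterCost Y (x i) ≤ |x i - y'| + |y' - Y j₀| := by
          calc clusterCost Y (x i) ≤ |x i - Y j₀| := hcost_le i j₀
          _ ≤ |x i - y'| + |y' - Y j₀| := abs_sub_le _ _ _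
        have h2 : |y' - Y j₀| = Y j₀ - y' := by
          rw [abs_of_nonpos (by linarith)]; ring
        have h3 : d i = |x i - y'| := by simp only [hd']
        linarith
      · intro i hi; exact absurd hi (Finset.notMem_empty i)
      · intro i hi
        rw [hQ', Finset.mem_filter] at hi
        have hxi : Y j₀ ≤ x i := not_lt.1 hi.2
        have h2 := hdi_pos i hxi
        linarith
      · rw [hG', hQ', Finset.empty_union]
        exact (Finset.filter_union_filter_not_eq _ S).symm
      · exact Finset.disjoint_empty_left _
      · exact Finset.disjoint_empty_left _
      · exact Finset.disjoint_filter_filter_not S S _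
    · -- there is also a center to the left of y'
      have hj₀pos : 0 < j₀.val := Nat.pos_of_ne_zero h0
      set j₁ : Fin k := ⟨j₀.val - 1, by omega⟩ with hj₁def
      have hj₁lt : j₁ < j₀ := by
        rw [Fin.lt_def]
        simp only [hj₁def]
        omega
      have hYj₁ : Y j₁ ≤ y' := by
        by_contra hcon
        push_neg at hcon
        have := hj₀min j₁ hcon
        exact absurd (lt_of_le_of_lt this hj₁lt) (lt_irrefl _)
      have ha0 : (0:ℝ) ≤ y' - Y j₁ := by linarith
      have hc0 : (0:ℝ) ≤ min (y' - Y j₁) (Y j₀ - y') := le_min ha0 hb0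
      set P := S.filter (fun i => x i ≤ Y j₁) with hP'
      set G := S.filter (fun i => Y j₁ < x i ∧ x i < Y j₀) with hG'
      set Q := S.filter (fun i => Y j₀ ≤ x i) with hQ'
      have hGcard : (G.card : ℝ) ≤ (n:ℝ) / k := by
        have hinj : G.card ≤ (Finset.Ioo (idx j₁) (idx j₀)).card := by
          apply Finset.card_le_card_of_injOn (fun i => σ.symm i)
          · intro i hi
            rw [hG', Finset.mem_coe, Finset.mem_filter] at hi
            exact Finset.mem_Ioo.2 ⟨hgt_of i j₁ hi.2.1, hlt_of i j₀ hi.2.2⟩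
          · exact fun p _ q _ hpq => σ.symm.injective hpq
        have hcard2 : (Finset.Ioo (idx j₁) (idx j₀)).card
            = (idx j₀).val - (idx j₁).val - 1 := Fin.card_Ioo _ _
        have hval0 : (idx j₀).val = (((j₁.val + 1) * n + n) + (k - 1)) / k - 1 := by
          have hv0 : j₀.val + 1 = j₁.val + 2 := by
            simp only [hj₁def]
            omega
          have he : (j₀.val + 1) * n = (j₁.val + 1) * n + n := by rw [hv0]; ring
          simp only [hidx]
          rw [he]
        have hval1 : (idx j₁).val = ((j₁.val + 1) * n + (k - 1)) / k - 1 := rfl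
        have hnat : k * G.card ≤ n := by
          have hgb := gap_mul_bound k n ((j₁.val + 1) * n) hk hn (by positivity)
          have hG2 : G.card ≤ (idx j₀).val - (idx j₁).val - 1 := by omega
          rw [hval0, hval1] at hG2
          calc k * G.card ≤ _ := Nat.mul_le_mul_left k hG2
          _ ≤ n := hgb
        rw [le_div_iff₀ hkR]
        calc (G.card : ℝ) * k = (k * G.card : ℕ) := by push_cast; ring
        _ ≤ (n : ℕ) := by exact_mod_cast hnat
      refine core_aux (P := P) (G := G) (Q := Q)
        (cost := fun i => clusterCost Y (x i)) (d := d)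
        (aP := y' - Y j₁) (aQ := Y j₀ - y') (c := min (y' - Y j₁) (Y j₀ - y'))
        (nk := (n:ℝ)/k) (A := α - 1)
        hβ1 hβA hc0 (min_le_left _ _) (min_le_right _ _) hd ?_ ?_ ?_ ?_ ?_ hGcard hScard
        ?_ ?_ ?_ ?_
      · intro i hi
        rw [hP', Finset.mem_filter] at hi
        have hxi : x i ≤ Y j₁ := hi.2
        have h1 : clusterCost Y (x i) ≤ Y j₁ - x i := by
          have := hcost_le i j₁
          rw [abs_of_nonpos (by linarith)] at this
          linarith
        have h2 : d i = y' - x i := by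
          simp only [hd']
          rw [abs_of_nonpos (by linarith)]
          ring
        linarith
      · intro i hi
        rw [hQ', Finset.mem_filter] at hi
        have hxi : Y j₀ ≤ x i := hi.2
        have h1 : clusterCost Y (x i) ≤ x i - Y j₀ := by
          have := hcost_le i j₀
          rwa [abs_of_nonneg (by linarith)] at this
        have h2 := hdi_pos i hxi
        linarith
      · intro i _
        have h3 : d i = |x i - y'| := by simp only [hd']
        have hba : clusterCost Y (x i) ≤ d i + (y' - Y j₁) := by
          have h1 : clusterCost Y (x i) ≤ |x i - y'| + |y' - Y j₁| := by
            calc clusterCost Y (x i) ≤ |x i - Y j₁| := hcost_le i j₁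
            _ ≤ |x i - y'| + |y' - Y j₁| := abs_sub_le _ _ _
          have h2 : |y' - Y j₁| = y' - Y j₁ := abs_of_nonneg ha0
          linarith
        have hbb : clusterCost Y (x i) ≤ d i + (Y j₀ - y') := by
          have h1 : clusterCost Y (x i) ≤ |x i - y'| + |y' - Y j₀| := by
            calc clusterCost Y (x i) ≤ |x i - Y j₀| := hcost_le i j₀
            _ ≤ |x i - y'| + |y' - Y j₀| := abs_sub_le _ _ _
          have h2 : |y' - Y j₀| = Y j₀ - y' := by
            rw [abs_of_nonpos (by linarith)]; ring
          linarith
        rcases le_total (y' - Y j₁) (Y j₀ - y') with h | h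
        · rw [min_eq_left h]; exact hba
        · rw [min_eq_right h]; exact hbb
      · intro i hi
        rw [hP', Finset.mem_filter] at hi
        have hxi : x i ≤ Y j₁ := hi.2
        have h2 : d i = y' - x i := by
          simp only [hd']
          rw [abs_of_nonpos (by linarith)]
          ring
        linarith
      · intro i hi
        rw [hQ', Finset.mem_filter] at hi
        have hxi : Y j₀ ≤ x i := hi.2
        have h2 := hdi_pos i hxi
        linarith
      · -- S = (P ∪ G) ∪ Q
        ext i
        simp only [hP', hG', hQ', Finset.mem_union, Finset.mem_filter]
        constructor
        · intro hi
          rcases le_or_gt (x i) (Y j₁) with h1 | h1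
          · exact Or.inl (Or.inl ⟨hi, h1⟩)
          · rcases le_or_gt (Y j₀) (x i) with h2 | h2
            · exact Or.inr ⟨hi, h2⟩
            · exact Or.inl (Or.inr ⟨hi, h1, h2⟩)
        · rintro ((⟨hi, _⟩ | ⟨hi, _⟩) | ⟨hi, _⟩) <;> exact hi
      · rw [Finset.disjoint_left]
        intro i h1 h2
        rw [hP', Finset.mem_filter] at h1
        rw [hG', Finset.mem_filter] at h2
        linarith [h1.2, h2.2.1]
      · rw [Finset.disjoint_left]
        intro i h1 h2
        rw [hP', Finset.mem_filter] at h1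
        rw [hQ', Finset.mem_filter] at h2
        linarith [h1.2, h2.2]
      · rw [Finset.disjoint_left]
        intro i h1 h2
        rw [hG', Finset.mem_filter] at h1
        rw [hQ', Finset.mem_filter] at h2
        linarith [h1.2.2, h2.2]
  · -- all centers are ≤ y'
    push_neg at hT
    set jlast : Fin k := ⟨k - 1, by omega⟩ with hjl
    have hidxlast : (idx jlast).val = n - 1 := by
      simp only [hidx, hjl]
      have h1 : (k - 1 + 1) = k := by omega
      rw [h1]
      rw [Nat.mul_add_div hk, Nat.div_eq_of_lt (by omega)]
      omega
    have hxle : ∀ i, x i ≤ Y jlast := by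
      intro i
      have hle : σ.symm i ≤ idx jlast := by
        rw [Fin.le_def, hidxlast]
        have := (σ.symm i).isLt
        omega
      calc x i = v (σ.symm i) := (hvx i).symm
      _ ≤ v (idx jlast) := hmono hle
      _ = Y jlast := rfl
    have hYy : Y jlast ≤ y' := hT jlast
    have step : ∑ i ∈ S, clusterCost Y (x i) ≤ ∑ i ∈ S, d i := by
      apply Finset.sum_le_sum
      intro i _
      calc clusterCost Y (x i) ≤ |x i - Y jlast| := hcost_le i jlast
      _ = Y jlast - x i := by rw [abs_of_nonpos (by linarith [hxle i])]; ring
      _ ≤ y' - x i := by linarith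
      _ ≤ |x i - y'| := by
          rw [abs_sub_comm]; exact le_abs_self _
    calc ∑ i ∈ S, clusterCost Y (x i) ≤ ∑ i ∈ S, d i := step
    _ ≤ β * ∑ i ∈ S, d i :=
        le_mul_of_one_le_left (Finset.sum_nonneg fun i _ => hd i) hβ1
end

section
/- Let (X,d) be a metric space, let x : Fin n → X be agents with n ≥ 1, let M ⊆ X be a finite nonempty set of feasible center locations, let k ≥ 1, and let α > 1 be a real number. Set β = max{4, 2/(α − 1) + 3}. Then there exists a k-clustering Y : Fin k → M that is an (α, β)-core clustering; that is, for every set S ⊆ Fin n with |S| ≥ α·n/k and every point y' ∈ M, one has β·Σ_{i∈S} d(x_i, y') ≥ Σ_{i∈S} min_{j<k} d(x_i, Y_j). -/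
/-- One can select the `m` points of `S` with smallest `f`-value. -/
lemma exists_min_subset {ι : Type*} [DecidableEq ι] (f : ι → ℝ) (S : Finset ι) :
    ∀ m : ℕ, m ≤ S.card →
      ∃ W, W ⊆ S ∧ W.card = m ∧ ∀ w ∈ W, ∀ v ∈ S, v ∉ W → f w ≤ f v := by
  intro m
  induction m with
  | zero => intro _; exact ⟨∅, Finset.empty_subset _, Finset.card_empty, by simp⟩
  | succ m ih =>
      intro hm
      obtain ⟨W, hWS, hWc, hWmin⟩ := ih (by omega)
      have hne : (S \ W).Nonempty := by
        rw [← Finset.card_pos, Finset.card_sdiff_of_subset hWS]; omega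
      obtain ⟨v, hv, hvmin⟩ := Finset.exists_min_image (S \ W) f hne
      rw [Finset.mem_sdiff] at hv
      refine ⟨insert v W, Finset.insert_subset hv.1 hWS, ?_, ?_⟩
      · rw [Finset.card_insert_of_notMem hv.2, hWc]
      · intro w hw u hu hunot
        have huW : u ∉ W := fun h => hunot (Finset.mem_insert_of_mem h)
        rcases Finset.mem_insert.mp hw with rfl | hwW
        · exact hvmin u (Finset.mem_sdiff.mpr ⟨hu, huW⟩)
        · exact hWmin w hwW u hu huW

/-- The greedy step: among all choices of a center `y ∈ M` and a group
`G ⊆ U` of the prescribed size, pick one minimizing the radius. -/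
lemma exists_opt {X : Type*} [MetricSpace X] {n : ℕ} (x : Fin n → X) {M : Set X}
    (hMfin : M.Finite) (hMne : M.Nonempty) (m : ℕ) (U : Finset (Fin n)) :
    ∃ (y : X) (G : Finset (Fin n)), y ∈ M ∧ G ⊆ U ∧ G.card = min m U.card ∧
      ∀ z ∈ M, ∀ T ⊆ U, T.card = min m U.card →
        ∀ i ∈ G, ∀ b : ℝ, (∀ w ∈ T, dist (x w) z ≤ b) → dist (x i) y ≤ b := by
  classical
  obtain ⟨T₀, hT₀U, hT₀card⟩ := Finset.exists_subset_card_eq (min_le_right m U.card)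
  set C : Finset (X × Finset (Fin n)) :=
    (hMfin.toFinset ×ˢ U.powerset).filter (fun p => p.2.card = min m U.card) with hC
  have hmemC : ∀ p : X × Finset (Fin n),
      p ∈ C ↔ p.1 ∈ M ∧ p.2 ⊆ U ∧ p.2.card = min m U.card := by
    intro p
    simp [hC, Finset.mem_filter, Finset.mem_product, hMfin.mem_toFinset,
      Finset.mem_powerset, and_assoc]
  have hCne : C.Nonempty := by
    obtain ⟨z₀, hz₀⟩ := hMne
    exact ⟨(z₀, T₀), (hmemC _).mpr ⟨hz₀, hT₀U, hT₀card⟩⟩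
  obtain ⟨p, hpC, hpmin⟩ :=
    Finset.exists_min_image C (fun p => p.2.sup (fun w => nndist (x w) p.1)) hCne
  obtain ⟨hpM, hpU, hpcard⟩ := (hmemC p).mp hpC
  refine ⟨p.1, p.2, hpM, hpU, hpcard, ?_⟩
  intro z hz T hTU hTcard i hiG b hb
  have hTne : T.Nonempty := by
    rw [← Finset.card_pos, hTcard, ← hpcard]
    exact Finset.card_pos.mpr ⟨i, hiG⟩
  have h1 : nndist (x i) p.1 ≤ p.2.sup (fun w => nndist (x w) p.1) :=
    Finset.le_sup (f := fun w => nndist (x w) p.1) hiG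
  have h2 := hpmin (z, T) ((hmemC _).mpr ⟨hz, hTU, hTcard⟩)
  obtain ⟨w, hwT, hsup⟩ := Finset.exists_mem_eq_sup T hTne (fun w => nndist (x w) z)
  have h3 : (nndist (x i) p.1 : ℝ) ≤ (nndist (x w) z : ℝ) := by
    exact_mod_cast le_trans h1 (le_of_le_of_eq h2 hsup)
  calc dist (x i) p.1 = (nndist (x i) p.1 : ℝ) := (dist_nndist _ _)
    _ ≤ (nndist (x w) z : ℝ) := h3
    _ = dist (x w) z := (dist_nndist _ _).symm
    _ ≤ b := hb w hwT

/-- The greedy capture construction. -/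
lemma exists_greedy {X : Type*} [MetricSpace X] {n : ℕ} (x : Fin n → X) {M : Set X}
    (hMfin : M.Finite) (hMne : M.Nonempty) (m : ℕ) :
    ∃ (y : ℕ → X) (G : ℕ → Finset (Fin n)) (U : ℕ → Finset (Fin n)),
      U 0 = Finset.univ ∧ (∀ t, U (t + 1) = U t \ G t) ∧
      (∀ t, y t ∈ M) ∧ (∀ t, G t ⊆ U t) ∧ (∀ t, (G t).card = min m (U t).card) ∧
      (∀ t, ∀ z ∈ M, ∀ T ⊆ U t, T.card = min m (U t).card →
        ∀ i ∈ G t, ∀ b : ℝ, (∀ w ∈ T, dist (x w) z ≤ b) → dist (x i) (y t) ≤ b) := by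
  classical
  choose pickY pickG hM hsub hcard hopt using fun U => exists_opt x hMfin hMne m U
  let U : ℕ → Finset (Fin n) := fun t =>
    Nat.rec Finset.univ (fun _ prev => prev \ pickG prev) t
  refine ⟨fun t => pickY (U t), fun t => pickG (U t), U, rfl, fun t => rfl,
    fun t => hM _, fun t => hsub _, fun t => hcard _, fun t => hopt _⟩

theorem stmt19 {X : Type*} [MetricSpace X] {n k : ℕ} (hn : 0 < n) (hk : 0 < k)
    (x : Fin n → X) (M : Set X) (hMfin : M.Finite) (hMne : M.Nonempty)
    (α : ℝ) (hα : 1 < α) :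
    ∃ Y : Fin k → X, (∀ j, Y j ∈ M) ∧
      ∀ S : Finset (Fin n), α * (n : ℝ) / (k : ℝ) ≤ S.card →
        ∀ y' ∈ M,
          ∑ i ∈ S, clusterCost Y (x i) ≤
            max 4 (2 / (α - 1) + 3) * ∑ i ∈ S, dist (x i) y' := by
  classical
  have hk0R : (0 : ℝ) < k := by exact_mod_cast hk
  have hn0R : (0 : ℝ) < n := by exact_mod_cast hn
  set m : ℕ := (n + k - 1) / k with hm_def
  -- basic facts about m
  have hkm : n ≤ k * m := by
    have h := Nat.div_add_mod (n + k - 1) k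
    have h2 : (n + k - 1) % k < k := Nat.mod_lt _ hk
    show n ≤ k * ((n + k - 1) / k)
    generalize hA : k * ((n + k - 1) / k) = A at h ⊢
    omega
  have hm1 : 1 ≤ m := by
    rw [hm_def, Nat.one_le_div_iff hk]; omega
  have hmleR : (m : ℝ) ≤ (n : ℝ) / k + 1 := by
    have h3 : m * k ≤ n + k - 1 := Nat.div_mul_le_self _ _
    have h4 : m * k + 1 ≤ n + k := by
      generalize hA : m * k = A at h3 ⊢
      omega
    have h4R : (m : ℝ) * k + 1 ≤ (n : ℝ) + k := by exact_mod_cast h4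
    rw [show (n : ℝ) / k + 1 = ((n : ℝ) + k) / k by field_simp, le_div_iff₀ hk0R]
    linarith
  -- the greedy clustering
  obtain ⟨y, G, U, hU0, hUsucc, hyM, hGsub, hGcard, hopt⟩ := exists_greedy x hMfin hMne m
  have hUcard : ∀ t, (U t).card = n - t * m := by
    intro t
    induction t with
    | zero => simp [hU0]
    | succ t ih =>
        rw [hUsucc, Finset.card_sdiff_of_subset (hGsub t), hGcard t, ih]
        have h : (t + 1) * m = t * m + m := by ring
        rw [h, Nat.min_def]
        split <;> omega
  have hUk : U k = ∅ := by
    rw [← Finset.card_eq_zero, hUcard k]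
    omega
  have hcover : ∀ i : Fin n, ∃ t, t < k ∧ i ∈ G t := by
    have key : ∀ t, ∀ i : Fin n, i ∉ U t → ∃ t', t' < t ∧ i ∈ G t' := by
      intro t
      induction t with
      | zero => intro i hi; exact absurd (hU0 ▸ Finset.mem_univ i) hi
      | succ t ih =>
          intro i hi
          by_cases hiU : i ∈ U t
          · refine ⟨t, Nat.lt_succ_self t, ?_⟩
            rw [hUsucc] at hi
            by_contra hG
            exact hi (Finset.mem_sdiff.mpr ⟨hiU, hG⟩)
          · obtain ⟨t', ht', hiG⟩ := ih i hiU
            exact ⟨t', Nat.lt_succ_of_lt ht', hiG⟩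
    intro i
    exact key k i (by rw [hUk]; exact Finset.notMem_empty i)
  refine ⟨fun t => y t, fun t => hyM t, ?_⟩
  intro S hS y' hy'
  -- m ≤ S.card
  have hsk : n ≤ S.card * k := by
    have h1 : α * n ≤ (S.card : ℝ) * k := (div_le_iff₀ hk0R).mp hS
    have h2 : (n : ℝ) ≤ S.card * k := by nlinarith
    exact_mod_cast h2
  have hms : m ≤ S.card := by
    rw [hm_def, Nat.div_le_iff_le_mul_add_pred hk]
    have : k * S.card = S.card * k := Nat.mul_comm _ _
    generalize hA : k * S.card = A at this ⊢
    omega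
  -- choose the m members of S closest to y'
  obtain ⟨W, hWS, hWc, hWmin⟩ := exists_min_subset (fun i => dist (x i) y') S m hms
  have hWne : W.Nonempty := by
    rw [← Finset.card_pos, hWc]; omega
  set D : ℝ := W.sup' hWne (fun w => dist (x w) y') with hD_def
  have hDub : ∀ w ∈ W, dist (x w) y' ≤ D :=
    fun w hw => Finset.le_sup' (f := fun w => dist (x w) y') hw
  obtain ⟨w0, hw0W, hw0D⟩ := Finset.exists_mem_eq_sup' hWne (fun w => dist (x w) y')
  rw [← hD_def] at hw0D
  have hD0 : 0 ≤ D := le_trans dist_nonneg (hDub w0 hw0W)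
  -- the first step capturing a member of W
  have hex : ∃ t, t < k ∧ (G t ∩ W).Nonempty := by
    obtain ⟨w, hw⟩ := hWne
    obtain ⟨t, htk, htG⟩ := hcover w
    exact ⟨t, htk, ⟨w, Finset.mem_inter.mpr ⟨htG, hw⟩⟩⟩
  set t₀ : ℕ := Nat.find hex with ht₀_def
  have ht₀ := Nat.find_spec hex
  have hWsubU : ∀ j, j ≤ t₀ → W ⊆ U j := by
    intro j
    induction j with
    | zero => intro _; rw [hU0]; exact Finset.subset_univ _
    | succ j ih =>
        intro hj
        rw [hUsucc]
        intro w hw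
        rw [Finset.mem_sdiff]
        refine ⟨ih (by omega) hw, ?_⟩
        intro hwG
        exact Nat.find_min hex (show j < t₀ by omega)
          ⟨by omega, ⟨w, Finset.mem_inter.mpr ⟨hwG, hw⟩⟩⟩
  have hWU : W ⊆ U t₀ := hWsubU t₀ le_rfl
  have hmin_eq : min m (U t₀).card = m :=
    min_eq_left (le_trans (hWc ▸ Finset.card_le_card hWU) (le_refl _))
  obtain ⟨j, hjGW⟩ := ht₀.2
  rw [Finset.mem_inter] at hjGW
  have hj1 : dist (x j) (y t₀) ≤ D :=
    hopt t₀ y' hy' W hWU (by rw [hWc, hmin_eq]) j hjGW.1 D hDub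
  have hj2 : dist (x j) y' ≤ D := hDub j hjGW.2
  -- per-agent bound
  have hperi : ∀ i ∈ S, clusterCost (fun t : Fin k => y t) (x i) ≤ dist (x i) y' + 2 * D := by
    intro i _
    have h1 : clusterCost (fun t : Fin k => y t) (x i) ≤ dist (x i) (y t₀) :=
      clusterCost_le _ _ ⟨t₀, ht₀.1⟩
    have h2 : dist y' (y t₀) ≤ 2 * D := by
      calc dist y' (y t₀) ≤ dist y' (x j) + dist (x j) (y t₀) := dist_triangle _ _ _
        _ ≤ D + D := add_le_add (by rw [dist_comm]; exact hj2) hj1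
        _ = 2 * D := by ring
    calc clusterCost (fun t : Fin k => y t) (x i) ≤ dist (x i) (y t₀) := h1
      _ ≤ dist (x i) y' + dist y' (y t₀) := dist_triangle _ _ _
      _ ≤ dist (x i) y' + 2 * D := by linarith
  -- sum bound
  set A : ℝ := ∑ i ∈ S, dist (x i) y' with hA_def
  have hA0 : 0 ≤ A := Finset.sum_nonneg fun i _ => dist_nonneg
  have hsum1 : ∑ i ∈ S, clusterCost (fun t : Fin k => y t) (x i) ≤ A + S.card * (2 * D) := by
    calc ∑ i ∈ S, clusterCost (fun t : Fin k => y t) (x i)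
        ≤ ∑ i ∈ S, (dist (x i) y' + 2 * D) := Finset.sum_le_sum hperi
      _ = A + S.card * (2 * D) := by
          rw [Finset.sum_add_distrib, Finset.sum_const, nsmul_eq_mul]
  -- key lower bound on A
  have hkey : ((S.card : ℝ) - m + 1) * D ≤ A := by
    set V : Finset (Fin n) := insert w0 (S \ W) with hV_def
    have hw0SW : w0 ∉ S \ W := fun h => (Finset.mem_sdiff.mp h).2 hw0W
    have hVS : V ⊆ S := by
      apply Finset.insert_subset (hWS hw0W)
      exact Finset.sdiff_subset
    have hVcard : V.card = S.card - m + 1 := by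
      rw [hV_def, Finset.card_insert_of_notMem hw0SW, Finset.card_sdiff_of_subset hWS, hWc]
    have hlb : ∀ v ∈ V, D ≤ dist (x v) y' := by
      intro v hv
      rcases Finset.mem_insert.mp hv with rfl | hvSW
      · exact le_of_eq hw0D
      · obtain ⟨hvS, hvW⟩ := Finset.mem_sdiff.mp hvSW
        calc D = dist (x w0) y' := hw0D
          _ ≤ dist (x v) y' := hWmin w0 hw0W v hvS hvW
    have h1 : (V.card : ℝ) * D ≤ ∑ v ∈ V, dist (x v) y' := by
      have := Finset.card_nsmul_le_sum V (fun v => dist (x v) y') D hlb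
      rwa [nsmul_eq_mul] at this
    have h2 : ∑ v ∈ V, dist (x v) y' ≤ A :=
      Finset.sum_le_sum_of_subset_of_nonneg hVS (fun _ _ _ => dist_nonneg)
    have h3 : ((S.card : ℝ) - m + 1) = (V.card : ℝ) := by
      rw [hVcard]
      push_cast [Nat.cast_sub hms]
      ring
    rw [h3]
    linarith
  -- final arithmetic
  set s : ℝ := (S.card : ℝ) with hs_def
  have hα1 : (0 : ℝ) < α - 1 := by linarith
  have hα0 : (0 : ℝ) < α := by linarith
  have hs_ge : α * n / k ≤ s := hS
  have hs_pos : 0 < s := lt_of_lt_of_le (by positivity) hs_ge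
  have hnk : (n : ℝ) / k ≤ s / α := by
    rw [div_le_div_iff₀ hk0R hα0]
    rw [div_le_iff₀ hk0R] at hs_ge
    nlinarith
  have hstep : s - s / α ≤ s - (m : ℝ) + 1 := by linarith
  have hkey2 : (s - s / α) * D ≤ A :=
    le_trans (mul_le_mul_of_nonneg_right hstep hD0) hkey
  have hprod : α * (s - s / α) = s * (α - 1) := by
    have hαne : α ≠ 0 := ne_of_gt hα0
    field_simp
  have hsD : s * (α - 1) * D ≤ α * A := by
    have h := mul_le_mul_of_nonneg_left hkey2 (le_of_lt hα0)
    calc s * (α - 1) * D = α * ((s - s / α) * D) := by rw [← mul_assoc, hprod]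
      _ ≤ α * A := h
  have hfin : A + s * (2 * D) ≤ (3 + 2 / (α - 1)) * A := by
    rw [← mul_le_mul_iff_of_pos_right hα1]
    have hexp : (3 + 2 / (α - 1)) * A * (α - 1) = 3 * A * (α - 1) + 2 * A := by
      field_simp
    rw [hexp]
    nlinarith
  have hβ : (3 + 2 / (α - 1)) ≤ max 4 (2 / (α - 1) + 3) := by
    rw [add_comm]
    exact le_max_right _ _
  calc ∑ i ∈ S, clusterCost (fun t : Fin k => y t) (x i)
      ≤ A + s * (2 * D) := hsum1
    _ ≤ (3 + 2 / (α - 1)) * A := hfin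
    _ ≤ max 4 (2 / (α - 1) + 3) * A := mul_le_mul_of_nonneg_right hβ hA0
end
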